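/- arXiv:1105.4722 — 2 statements merged into one kernel-verified Lean document; each statement's English description precedes it below -/
import Mathlib

section
/- Let q ∈ ℂ with q ≠ 0 and q^{2m} ≠ 1 for all 1 ≤ m ≤ ℓ, and let A, B ⊆ {1,…,ℓ} with |A| = i, |B| = j. Then on (ℂ²)^{⊗ℓ}: P^{(ℓ)} · |1_A⟩⟨1_B| · q^{−(Σ_{a∈A} a) + i} = [ℓ choose i]_q^{−1} q^{−i(i−1)/2} · ||ℓ,i⟩ ⟨1_B|; in particular the left-hand side is independent of the choice of A. -/
noncomputable section

/-- The q-integer `[n]_q = (qⁿ − q⁻ⁿ)/(q − q⁻¹)`. -/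
def qint (q : ℂ) (n : ℕ) : ℂ := (q ^ (n : ℤ) - q ^ (-(n : ℤ))) / (q - q⁻¹)

/-- The q-factorial `[n]_q! = ∏_{m=1}^n [m]_q`. -/
def qfact (q : ℂ) (n : ℕ) : ℂ := ∏ m ∈ Finset.range n, qint q (m + 1)

/-- The q-binomial coefficient `[l choose n]_q`. -/
def qbinom (q : ℂ) (l n : ℕ) : ℂ := qfact q l / (qfact q (l - n) * qfact q n)
/-- Index of the standard basis of `(ℂ²)^{⊗l}`: spin configurations `{0,1}^l`. -/
abbrev SpinIdx (l : ℕ) := Fin l → Fin 2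

/-- Vectors in `(ℂ²)^{⊗l}`. -/
abbrev SpinVec (l : ℕ) := SpinIdx l → ℂ

/-- Operators (matrices) on `(ℂ²)^{⊗l}`. -/
abbrev SpinOp (l : ℕ) := Matrix (SpinIdx l) (SpinIdx l) ℂ

/-- The indicator configuration of a subset `A`: down spins exactly on `A`. -/
def indFun {l : ℕ} (A : Finset (Fin l)) : SpinIdx l := fun k => if k ∈ A then 1 else 0

/-- The standard basis vector `|1_A⟩` with down spins exactly on `A`. -/
def bvec {l : ℕ} (A : Finset (Fin l)) : SpinVec l := fun ε => if ε = indFun A then 1 else 0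

/-- `Σ_{a ∈ A} a`, where the site `k : Fin l` has 1-based number `k+1 ∈ {1,…,l}`. -/
def siteSum {l : ℕ} (A : Finset (Fin l)) : ℤ := ∑ a ∈ A, ((a : ℤ) + 1)

/-- Coefficient `q^{(Σ_{a∈A} a) − i·l + i(i−1)/2}`. -/
def hwt (q : ℂ) {l : ℕ} (i : ℕ) (A : Finset (Fin l)) : ℂ :=
  q ^ (siteSum A - (i : ℤ) * (l : ℤ) + (i : ℤ) * ((i : ℤ) - 1) / 2)

/-- The spin-`l/2` basis vector `||l,i⟩`. -/
def hv (q : ℂ) (l i : ℕ) : SpinVec l :=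
  ∑ A ∈ Finset.powersetCard i (Finset.univ : Finset (Fin l)), hwt q i A • bvec A

/-- The conjugate covector `⟨l,j||` (represented by its coefficient vector; the pairing
is the bilinear transpose pairing). -/
def cv (q : ℂ) (l j : ℕ) : SpinVec l :=
  ((qbinom q l j)⁻¹ * q ^ ((j : ℤ) * ((l : ℤ) - (j : ℤ)))) •
    ∑ B ∈ Finset.powersetCard j (Finset.univ : Finset (Fin l)), hwt q j B • bvec B

/-- The rank-one operator `|u⟩⟨v|` (transpose pairing). -/
def rankOne {l : ℕ} (u v : SpinVec l) : SpinOp l := Matrix.of fun ε ε' => u ε * v ε'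

/-- The spin-`l/2` projector `P^{(l)} = Σ_{n=0}^{l} ||l,n⟩⟨l,n||`. -/
def proj (q : ℂ) (l : ℕ) : SpinOp l :=
  ∑ n ∈ Finset.range (l + 1), rankOne (hv q l n) (cv q l n)

/-- The elementary operator `e_k^{a,b}` acting on the k-th tensor factor. -/
def elem {l : ℕ} (k : Fin l) (a b : Fin 2) : SpinOp l :=
  Matrix.of fun ε ε' => if ε k = a ∧ ε' k = b ∧ ∀ m, m ≠ k → ε m = ε' m then 1 else 0

/-- The ordered product `e_1^{e'_1,e_1} ⋯ e_l^{e'_l,e_l}`. -/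
def elemProd {l : ℕ} (e' e : Fin l → Fin 2) : SpinOp l :=
  (List.ofFn fun k : Fin l => elem k (e' k) (e k)).prod

/-- The gauge matrix `⊗_s diag(1, e^{w s})`. -/
def gaugeM {S : Type*} [Fintype S] [DecidableEq S] (w : S → ℂ) :
    Matrix (S → Fin 2) (S → Fin 2) ℂ :=
  Matrix.diagonal fun ε => ∏ s, if ε s = 1 then Complex.exp (w s) else 1

lemma indFun_injective {l : ℕ} : Function.Injective (indFun (l := l)) := by
  intro A B h
  ext k
  have h1 := congrFun h k
  simp only [indFun] at h1
  by_cases hA : k ∈ A <;> by_cases hB : k ∈ B <;> simp_all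

lemma rankOne_mul {l : ℕ} (x y u v : SpinVec l) :
    rankOne x y * rankOne u v = (∑ κ, y κ * u κ) • rankOne x v := by
  ext ε ε'
  simp only [rankOne, Matrix.mul_apply, Matrix.smul_apply, Matrix.of_apply, smul_eq_mul,
    Finset.sum_mul]
  exact Finset.sum_congr rfl fun κ _ => by ring

lemma pair_bvec {l : ℕ} (y : SpinVec l) (A : Finset (Fin l)) :
    ∑ κ, y κ * bvec A κ = y (indFun A) := by
  simp [bvec, mul_ite, Finset.sum_ite_eq']

lemma cv_apply_ind (q : ℂ) {l : ℕ} (n : ℕ) (A : Finset (Fin l)) :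
    cv q l n (indFun A) =
      if A.card = n then (qbinom q l n)⁻¹ * q ^ ((n : ℤ) * ((l : ℤ) - (n : ℤ))) * hwt q n A
      else 0 := by
  simp only [cv, Pi.smul_apply, Finset.sum_apply, Pi.smul_apply, smul_eq_mul, bvec]
  have : ∀ B ∈ Finset.powersetCard n (Finset.univ : Finset (Fin l)),
      hwt q n B * (if indFun A = indFun B then (1 : ℂ) else 0)
        = if B = A then hwt q n A else 0 := by
    intro B _
    by_cases hBA : B = A
    · subst hBA; simp
    · have : indFun A ≠ indFun B := fun h => hBA (indFun_injective h).symm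
      simp [this, hBA]
  rw [Finset.sum_congr rfl this, Finset.sum_ite_eq']
  simp only [Finset.mem_powersetCard_univ]
  by_cases hc : A.card = n
  · simp [hc]
  · simp [hc]

/-- For `A, B ⊆ {1,…,ℓ}` with `|A| = i`, `|B| = j`:
`P^{(ℓ)} |1_A⟩⟨1_B| · q^{−(Σ_{a∈A} a) + i}
  = [ℓ choose i]_q^{−1} q^{−i(i−1)/2} ||ℓ,i⟩⟨1_B|`;
in particular the left-hand side is independent of `A`. -/
theorem proj_rankOne_independent (ℓ : ℕ) (q : ℂ) (hq : q ≠ 0)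
    (hroot : ∀ m : ℕ, 1 ≤ m → m ≤ ℓ → q ^ (2 * m) ≠ 1)
    (i j : ℕ) (A B : Finset (Fin ℓ)) (hA : A.card = i) (hB : B.card = j) :
    q ^ (-(siteSum A) + (i : ℤ)) • (proj q ℓ * rankOne (bvec A) (bvec B))
      = ((qbinom q ℓ i)⁻¹ * q ^ (-((i : ℤ) * ((i : ℤ) - 1) / 2))) •
          rankOne (hv q ℓ i) (bvec B) := by
  have hi : i ≤ ℓ := by
    have := A.card_le_univ
    simpa [hA] using this
  have key : proj q ℓ * rankOne (bvec A) (bvec B)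
      = ((qbinom q ℓ i)⁻¹ * q ^ ((i : ℤ) * ((ℓ : ℤ) - (i : ℤ))) * hwt q i A) •
          rankOne (hv q ℓ i) (bvec B) := by
    unfold proj
    rw [Finset.sum_mul]
    have hterm : ∀ n ∈ Finset.range (ℓ + 1),
        rankOne (hv q ℓ n) (cv q ℓ n) * rankOne (bvec A) (bvec B)
          = if n = i then
              ((qbinom q ℓ i)⁻¹ * q ^ ((i : ℤ) * ((ℓ : ℤ) - (i : ℤ))) * hwt q i A) •
                rankOne (hv q ℓ i) (bvec B)
            else 0 := by
      intro n _
      rw [rankOne_mul, pair_bvec, cv_apply_ind]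
      by_cases hni : n = i
      · subst hni; simp [hA]
      · have : A.card ≠ n := by simp [hA, Ne.symm hni]
        simp [this, hni]
    rw [Finset.sum_congr rfl hterm, Finset.sum_ite_eq']
    simp [Nat.lt_succ_iff, hi]
  rw [key, smul_smul]
  congr 1
  have h2D : 2 * ((i : ℤ) * ((i : ℤ) - 1) / 2) = (i : ℤ) * ((i : ℤ) - 1) := by
    apply Int.mul_ediv_cancel'
    rcases Int.even_mul_succ_self ((i : ℤ) - 1) with ⟨k, hk⟩
    exact ⟨k, by linarith [hk]⟩
  have hexp : (-(siteSum A) + (i : ℤ)) + (((i : ℤ) * ((ℓ : ℤ) - (i : ℤ))) +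
      (siteSum A - (i : ℤ) * (ℓ : ℤ) + (i : ℤ) * ((i : ℤ) - 1) / 2))
      = -((i : ℤ) * ((i : ℤ) - 1) / 2) := by linear_combination h2D
  unfold hwt
  have h3 : q ^ (-siteSum A + (i : ℤ)) *
        (q ^ ((i : ℤ) * ((ℓ : ℤ) - (i : ℤ))) *
          q ^ (siteSum A - (i : ℤ) * (ℓ : ℤ) + (i : ℤ) * ((i : ℤ) - 1) / 2))
      = q ^ (-((i : ℤ) * ((i : ℤ) - 1) / 2)) := by
    rw [← zpow_add₀ hq, ← zpow_add₀ hq]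
    exact congrArg (fun t : ℤ => q ^ t) hexp
  calc q ^ (-siteSum A + (i : ℤ)) *
        ((qbinom q ℓ i)⁻¹ * q ^ ((i : ℤ) * ((ℓ : ℤ) - (i : ℤ))) *
          q ^ (siteSum A - (i : ℤ) * (ℓ : ℤ) + (i : ℤ) * ((i : ℤ) - 1) / 2))
      = (qbinom q ℓ i)⁻¹ * (q ^ (-siteSum A + (i : ℤ)) *
          (q ^ ((i : ℤ) * ((ℓ : ℤ) - (i : ℤ))) *
            q ^ (siteSum A - (i : ℤ) * (ℓ : ℤ) + (i : ℤ) * ((i : ℤ) - 1) / 2))) := by ring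
    _ = (qbinom q ℓ i)⁻¹ * q ^ (-((i : ℤ) * ((i : ℤ) - 1) / 2)) := by rw [h3]
end
end

section
/- Fix integers ℓ ≥ 2, N_s ≥ 1, L = ℓN_s, and parameters η, ξ₁,…,ξ_{N_s} ∈ ℂ, and set the inhomogeneities equal to the complete ℓ-strings w_j = w^{(ℓ)}_j. Let 1 ≤ k ≤ N_s and assume sinh(ξ_k − w^{(ℓ)}_j + η) ≠ 0 for all 1 ≤ j ≤ L, so that the transfer matrix A(ξ_k)+D(ξ_k) is defined. Then for every integer M with 1 ≤ M ≤ L−1, the transfer matrix A(ξ_k)+D(ξ_k) preserves the subspace of (ℂ²)^{⊗L} spanned by the basis vectors with exactly M down spins, and its restriction to this subspace is not invertible (it has nontrivial kernel); i.e., the spin-1/2 transfer matrix with complete ℓ-string inhomogeneities is non-regular at λ = ξ_k. -/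
noncomputable section

/-- Sites of the chain of `Ns` blocks of `l` spin-1/2 sites: block `b`, position `β`
(1-based site number `l·b + β + 1`; lexicographic order is the site order). -/
abbrev FSite (l Ns : ℕ) := Fin Ns × Fin l

/-- Spin configurations of the full chain `(ℂ²)^{⊗(l·Ns)}`. -/
abbrev FIdx2 (l Ns : ℕ) := FSite l Ns → Fin 2

/-- Operators on the full chain. -/
abbrev FOp (l Ns : ℕ) := Matrix (FIdx2 l Ns) (FIdx2 l Ns) ℂ

/-- Embed an operator on one block of `l` factors into the full chain (block `b`,
identity elsewhere). -/
def embed {l Ns : ℕ} (b : Fin Ns) (M : SpinOp l) : FOp l Ns :=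
  Matrix.of fun ε ε' =>
    if ∀ s : FSite l Ns, s.1 ≠ b → ε s = ε' s then
      M (fun β => ε (b, β)) (fun β => ε' (b, β)) else 0

/-- The complete `l`-string inhomogeneities `w^{(l)}_{l(b−1)+β} = ξ_b − (β−1)η`. -/
def wstring (l Ns : ℕ) (η : ℂ) (ξ : Fin Ns → ℂ) : FSite l Ns → ℂ :=
  fun s => ξ s.1 - (s.2.val : ℂ) * η

/-- The full projector `P^{(l)}_{1…L} = ⊗_{b=1}^{Ns} P^{(l)}` (one per block). -/
def projFull (q : ℂ) (l Ns : ℕ) : FOp l Ns :=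
  Matrix.of fun ε ε' => ∏ b : Fin Ns, proj q l (fun β => ε (b, β)) (fun β => ε' (b, β))

/-- The normalization `F(l,n) = [l choose n]_q q^{−n(l−n)}`. -/
def Fnorm (q : ℂ) (l n : ℕ) : ℂ := qbinom q l n * q ^ (-(n : ℤ) * ((l : ℤ) - (n : ℤ)))

/-- The normalization factor `N̂_{i,j} = (g(j)/g(i))·(F(l,i)/F(l,j))·e^{η(i(l−i)−j(l−j))/2}`. -/
def Nhat (q η : ℂ) (g : ℕ → ℂ) (l i j : ℕ) : ℂ :=
  (g j / g i) * (Fnorm q l i / Fnorm q l j) *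
    Complex.exp (η * (((i : ℂ) * ((l : ℂ) - (i : ℂ)) - (j : ℂ) * ((l : ℂ) - (j : ℂ))) / 2))
/-- `b(u) = sinh u / sinh(u+η)`. -/
def bC (η u : ℂ) : ℂ := Complex.sinh u / Complex.sinh (u + η)

/-- `c⁺(u) = e^{u} sinh η / sinh(u+η)`. -/
def cP (η u : ℂ) : ℂ := Complex.exp u * Complex.sinh η / Complex.sinh (u + η)

/-- `c⁻(u) = e^{−u} sinh η / sinh(u+η)`. -/
def cM (η u : ℂ) : ℂ := Complex.exp (-u) * Complex.sinh η / Complex.sinh (u + η)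

/-- The homogeneous-grading R-matrix `R⁺(u)` on `ℂ² ⊗ ℂ²`: identity on `|00⟩`, `|11⟩`,
and `[[b, c⁻],[c⁺, b]]` on `span{|01⟩, |10⟩}`. -/
def Rplus (η u : ℂ) : Matrix (Fin 2 × Fin 2) (Fin 2 × Fin 2) ℂ :=
  Matrix.of fun p p' =>
    if p = p' then (if p.1 = p.2 then 1 else bC η u)
    else if p.1 = 0 ∧ p.2 = 1 ∧ p'.1 = 1 ∧ p'.2 = 0 then cM η u
    else if p.1 = 1 ∧ p.2 = 0 ∧ p'.1 = 0 ∧ p'.2 = 1 then cP η u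
    else 0

/-- The principal-grading (symmetric) R-matrix `R^p(u)`: identity on `|00⟩`, `|11⟩`,
and `[[b, c],[c, b]]` on `span{|01⟩, |10⟩}` with `c(u) = sinh η / sinh(u+η)`. -/
def Rprin (η u : ℂ) : Matrix (Fin 2 × Fin 2) (Fin 2 × Fin 2) ℂ :=
  Matrix.of fun p p' =>
    if p = p' then (if p.1 = p.2 then 1 else bC η u)
    else if (p.1 = 0 ∧ p.2 = 1 ∧ p'.1 = 1 ∧ p'.2 = 0) ∨
            (p.1 = 1 ∧ p.2 = 0 ∧ p'.1 = 0 ∧ p'.2 = 1) then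
      Complex.sinh η / Complex.sinh (u + η)
    else 0

/-- A 4×4 R-matrix acting on the pair (auxiliary space 0, quantum site j), identity on
the other sites. -/
def Rsite {S : Type*} [DecidableEq S] [Fintype S]
    (R2 : Matrix (Fin 2 × Fin 2) (Fin 2 × Fin 2) ℂ) (j : S) :
    Matrix (Fin 2 × (S → Fin 2)) (Fin 2 × (S → Fin 2)) ℂ :=
  Matrix.of fun p p' =>
    if ∀ k, k ≠ j → p.2 k = p'.2 k then R2 (p.1, p.2 j) (p'.1, p'.2 j) else 0

/-- The monodromy matrix `T(λ) = R_{0,L}(λ−w_L) ⋯ R_{0,1}(λ−w_1)`, where `sites` lists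
the sites `1,…,L` in increasing order. -/
def monodromy {S : Type*} [DecidableEq S] [Fintype S]
    (R2 : ℂ → Matrix (Fin 2 × Fin 2) (Fin 2 × Fin 2) ℂ)
    (sites : List S) (w : S → ℂ) (lam : ℂ) :
    Matrix (Fin 2 × (S → Fin 2)) (Fin 2 × (S → Fin 2)) ℂ :=
  ((sites.map fun j => Rsite (R2 (lam - w j)) j).reverse).prod

/-- The auxiliary-space block entry of a monodromy matrix: `T_{a,b}` acting on the
quantum space (so `A = T_{0,0}`, `B = T_{0,1}`, `C = T_{1,0}`, `D = T_{1,1}`). -/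
def entryT {S : Type*} (T : Matrix (Fin 2 × (S → Fin 2)) (Fin 2 × (S → Fin 2)) ℂ)
    (a b : Fin 2) : Matrix (S → Fin 2) (S → Fin 2) ℂ :=
  Matrix.of fun ε ε' => T (a, ε) (b, ε')

/-- The number of down spins of a configuration. -/
def dcount {S : Type*} [Fintype S] [DecidableEq S] (ε : S → Fin 2) : ℕ :=
  (Finset.univ.filter fun s => ε s = 1).card

/-- The list of sites of the blocked chain in increasing (lexicographic) order. -/
def sitesList (l Ns : ℕ) : List (Fin Ns × Fin l) :=
  (List.finRange Ns).flatMap fun b => (List.finRange l).map fun β => (b, β)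


namespace StringAux

lemma dcount_eq_sum {S : Type*} [Fintype S] [DecidableEq S] (ε : S → Fin 2) :
    dcount ε = ∑ s, (ε s).val := by
  rw [dcount, Finset.card_filter]
  refine Finset.sum_congr rfl fun s _ => ?_
  have : ∀ x : Fin 2, (if x = 1 then (1:ℕ) else 0) = x.val := by decide
  exact this (ε s)

def consv {S : Type*} [Fintype S] [DecidableEq S]
    (T : Matrix (Fin 2 × (S → Fin 2)) (Fin 2 × (S → Fin 2)) ℂ) : Prop :=
  ∀ p p', T p p' ≠ 0 → (p.1 : ℕ) + dcount p.2 = (p'.1 : ℕ) + dcount p'.2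

lemma consv_mul {S : Type*} [Fintype S] [DecidableEq S]
    {A B : Matrix (Fin 2 × (S → Fin 2)) (Fin 2 × (S → Fin 2)) ℂ}
    (hA : consv A) (hB : consv B) : consv (A * B) := by
  intro p p' h
  rw [Matrix.mul_apply] at h
  obtain ⟨y, -, hy⟩ := Finset.exists_ne_zero_of_sum_ne_zero h
  obtain ⟨h1, h2⟩ := mul_ne_zero_iff.mp hy
  rw [hA p y h1, hB y p' h2]

lemma consv_one {S : Type*} [Fintype S] [DecidableEq S] :
    consv (1 : Matrix (Fin 2 × (S → Fin 2)) (Fin 2 × (S → Fin 2)) ℂ) := by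
  intro p p' h
  rw [Matrix.one_apply] at h
  by_cases hp : p = p'
  · rw [hp]
  · simp [hp] at h

lemma consv_prod {S : Type*} [Fintype S] [DecidableEq S]
    (l : List (Matrix (Fin 2 × (S → Fin 2)) (Fin 2 × (S → Fin 2)) ℂ))
    (h : ∀ m ∈ l, consv m) : consv l.prod := by
  induction l with
  | nil => exact consv_one
  | cons a l ih =>
      rw [List.prod_cons]
      exact consv_mul (h a List.mem_cons_self) (ih fun m hm => h m (List.mem_cons_of_mem a hm))

lemma rplus_spin (η u : ℂ) (p p' : Fin 2 × Fin 2) (h : Rplus η u p p' ≠ 0) :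
    (p.1 : ℕ) + p.2.val = (p'.1 : ℕ) + p'.2.val := by
  fin_cases p <;> fin_cases p' <;> simp_all [Rplus, Prod.ext_iff]

lemma consv_rsite {S : Type*} [Fintype S] [DecidableEq S]
    (R2 : Matrix (Fin 2 × Fin 2) (Fin 2 × Fin 2) ℂ)
    (hR : ∀ p p', R2 p p' ≠ 0 → (p.1 : ℕ) + p.2.val = (p'.1 : ℕ) + p'.2.val) (j : S) :
    consv (Rsite R2 j) := by
  rintro ⟨a, ε⟩ ⟨b, ε'⟩ h
  rw [Rsite, Matrix.of_apply] at h
  split at h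
  case isFalse => exact absurd rfl h
  case isTrue hoff =>
    have key := hR _ _ h
    simp only at key hoff
    simp only [dcount_eq_sum]
    rw [← Finset.sum_erase_add Finset.univ _ (Finset.mem_univ j),
        ← Finset.sum_erase_add Finset.univ (fun s => (ε' s).val) (Finset.mem_univ j)]
    have heq : ∑ s ∈ Finset.univ.erase j, (ε s).val
        = ∑ s ∈ Finset.univ.erase j, (ε' s).val :=
      Finset.sum_congr rfl fun s hs => by rw [hoff s (Finset.mem_erase.mp hs).1]
    omega

end StringAux


namespace StringAux

/-- Permutation matrix on `ℂ² ⊗ ℂ²`. -/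
def swapM : Matrix (Fin 2 × Fin 2) (Fin 2 × Fin 2) ℂ :=
  Matrix.of fun p p' => if p.1 = p'.2 ∧ p.2 = p'.1 then 1 else 0

lemma rplus_zero (η : ℂ) (hη : Complex.sinh η ≠ 0) : Rplus η 0 = swapM := by
  ext p p'
  fin_cases p <;> fin_cases p' <;>
    simp [Rplus, swapM, bC, cP, cM, Complex.sinh_zero, Prod.ext_iff, div_self hη]

lemma rsite_swap_apply {S : Type*} [Fintype S] [DecidableEq S] (j : S)
    (a c : Fin 2) (ε ε' : S → Fin 2) :
    Rsite swapM j (a, ε) (c, ε') =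
      if a = ε' j ∧ ε j = c ∧ ∀ k, k ≠ j → ε k = ε' k then 1 else 0 := by
  rw [Rsite, Matrix.of_apply]
  dsimp only
  by_cases hoff : ∀ k, k ≠ j → ε k = ε' k
  · rw [if_pos hoff, swapM, Matrix.of_apply]
    by_cases h1 : a = ε' j ∧ ε j = c
    · rw [if_pos h1, if_pos ⟨h1.1, h1.2, hoff⟩]
    · rw [if_neg (by tauto), if_neg (by tauto)]
  · rw [if_neg hoff, if_neg (by tauto)]

/-- The operator `R_{j0 j1}` acting on sites `j0, j1` of the quantum space (trivially on
the auxiliary space). -/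
def Qop {S : Type*} [Fintype S] [DecidableEq S]
    (R1 : Matrix (Fin 2 × Fin 2) (Fin 2 × Fin 2) ℂ) (j0 j1 : S) :
    Matrix (Fin 2 × (S → Fin 2)) (Fin 2 × (S → Fin 2)) ℂ :=
  Matrix.of fun p p' =>
    if p.1 = p'.1 ∧ ∀ s, s ≠ j0 → s ≠ j1 → p.2 s = p'.2 s then
      R1 (p.2 j0, p.2 j1) (p'.2 j0, p'.2 j1)
    else 0

lemma rsite_apply {S : Type*} [Fintype S] [DecidableEq S]
    (R2 : Matrix (Fin 2 × Fin 2) (Fin 2 × Fin 2) ℂ) (j : S)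
    (a c : Fin 2) (ε ε' : S → Fin 2) :
    Rsite R2 j (a, ε) (c, ε') =
      if ∀ k, k ≠ j → ε k = ε' k then R2 (a, ε j) (c, ε' j) else 0 := rfl

lemma qop_apply {S : Type*} [Fintype S] [DecidableEq S]
    (R1 : Matrix (Fin 2 × Fin 2) (Fin 2 × Fin 2) ℂ) (j0 j1 : S)
    (a c : Fin 2) (ε ε' : S → Fin 2) :
    Qop R1 j0 j1 (a, ε) (c, ε') =
      if a = c ∧ ∀ s, s ≠ j0 → s ≠ j1 → ε s = ε' s then
        R1 (ε j0, ε j1) (ε' j0, ε' j1) else 0 := rfl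

lemma swap_conj {S : Type*} [Fintype S] [DecidableEq S]
    (R1 : Matrix (Fin 2 × Fin 2) (Fin 2 × Fin 2) ℂ) (j0 j1 : S) (h01 : j0 ≠ j1) :
    Rsite R1 j1 * Rsite swapM j0 = Rsite swapM j0 * Qop R1 j0 j1 := by
  have h10 : j1 ≠ j0 := Ne.symm h01
  ext ⟨a, ε⟩ ⟨c, ε''⟩
  rw [Matrix.mul_apply, Matrix.mul_apply]
  rw [Fintype.sum_eq_single ((ε'' j0, Function.update ε'' j0 c) : Fin 2 × (S → Fin 2)) ?hL]
  case hL =>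
    rintro ⟨b, ε'⟩ hne
    rw [rsite_swap_apply]
    by_cases hc : b = ε'' j0 ∧ ε' j0 = c ∧ ∀ k, k ≠ j0 → ε' k = ε'' k
    · exfalso; apply hne
      obtain ⟨hb, hj, hoff⟩ := hc
      refine Prod.ext hb (funext fun s => ?_)
      show ε' s = Function.update ε'' j0 c s
      by_cases hs : s = j0
      · subst hs; rw [hj, Function.update_self]
      · rw [hoff s hs, Function.update_of_ne hs]
    · rw [if_neg (by tauto), mul_zero]
  rw [Fintype.sum_eq_single ((ε j0, Function.update ε j0 a) : Fin 2 × (S → Fin 2)) ?hR]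
  case hR =>
    rintro ⟨b, ε'⟩ hne
    rw [rsite_swap_apply]
    by_cases hc : a = ε' j0 ∧ ε j0 = b ∧ ∀ k, k ≠ j0 → ε k = ε' k
    · exfalso; apply hne
      obtain ⟨hb, hj, hoff⟩ := hc
      refine Prod.ext hj.symm (funext fun s => ?_)
      show ε' s = Function.update ε j0 a s
      by_cases hs : s = j0
      · subst hs; rw [← hb, Function.update_self]
      · rw [← hoff s hs, Function.update_of_ne hs]
    · rw [if_neg (by tauto), zero_mul]
  -- evaluate the two swap factors to 1
  rw [rsite_swap_apply, rsite_swap_apply]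
  rw [if_pos ⟨rfl, Function.update_self j0 c ε'',
      fun k hk => Function.update_of_ne hk c ε''⟩]
  rw [if_pos ⟨(Function.update_self j0 a ε).symm, rfl,
      fun k hk => (Function.update_of_ne hk a ε).symm⟩]
  rw [mul_one, one_mul]
  rw [rsite_apply, qop_apply]
  rw [Function.update_of_ne h10 c ε'', Function.update_self j0 a ε,
      Function.update_of_ne h10 a ε]
  by_cases hD : ε j0 = c ∧ ∀ s, s ≠ j0 → s ≠ j1 → ε s = ε'' s
  · rw [if_pos ?c1, if_pos ⟨hD.1, fun s hs0 hs1 => by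
      rw [Function.update_of_ne hs0]; exact hD.2 s hs0 hs1⟩]
    case c1 =>
      intro k hk
      by_cases hkj : k = j0
      · subst hkj; rw [Function.update_self]; exact hD.1
      · rw [Function.update_of_ne hkj]; exact hD.2 k hkj hk
  · rw [if_neg ?c1, if_neg ?c2]
    case c1 =>
      intro hcond
      apply hD
      refine ⟨by have := hcond j0 h01; rwa [Function.update_self] at this,
        fun s hs0 hs1 => ?_⟩
      have := hcond s hs1
      rwa [Function.update_of_ne hs0] at this
    case c2 =>
      rintro ⟨h1, h2⟩
      apply hD
      refine ⟨h1, fun s hs0 hs1 => ?_⟩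
      have := h2 s hs0 hs1
      rwa [Function.update_of_ne hs0] at this

end StringAux

namespace StringAux

lemma qop_comm {S : Type*} [Fintype S] [DecidableEq S]
    (R1 R2 : Matrix (Fin 2 × Fin 2) (Fin 2 × Fin 2) ℂ) (j0 j1 j : S)
    (h0 : j ≠ j0) (h1 : j ≠ j1) :
    Qop R1 j0 j1 * Rsite R2 j = Rsite R2 j * Qop R1 j0 j1 := by
  ext ⟨a, ε⟩ ⟨c, ε''⟩
  rw [Matrix.mul_apply, Matrix.mul_apply]
  set ν : S → Fin 2 := fun s => if s = j0 then ε'' j0 else if s = j1 then ε'' j1 else ε s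
    with hν
  set ρ : S → Fin 2 := fun s => if s = j then ε'' j else ε s with hρ
  have hνj0 : ν j0 = ε'' j0 := by simp only [hν]; simp
  have hνj1 : ν j1 = ε'' j1 := by
    simp only [hν]; by_cases h : j1 = j0 <;> simp [h]
  have hνj : ν j = ε j := by simp only [hν]; simp [h0, h1]
  have hνo : ∀ s, s ≠ j0 → s ≠ j1 → ν s = ε s := by
    intro s hs0 hs1; simp only [hν]; simp [hs0, hs1]
  have hρj : ρ j = ε'' j := by simp only [hρ]; simp
  have hρo : ∀ s, s ≠ j → ρ s = ε s := by
    intro s hs; simp only [hρ]; simp [hs]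
  rw [Fintype.sum_eq_single ((a, ν) : Fin 2 × (S → Fin 2)) ?hL]
  case hL =>
    rintro ⟨b, ε'⟩ hne
    by_cases hz : Qop R1 j0 j1 (a, ε) (b, ε') = 0
    · rw [hz, zero_mul]
    by_cases hz2 : Rsite R2 j (b, ε') (c, ε'') = 0
    · rw [hz2, mul_zero]
    exfalso; apply hne
    rw [qop_apply] at hz
    rw [rsite_apply] at hz2
    by_cases hcq : a = b ∧ ∀ s, s ≠ j0 → s ≠ j1 → ε s = ε' s
    swap; · exact absurd (if_neg hcq) hz
    by_cases hcr : ∀ k, k ≠ j → ε' k = ε'' k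
    swap; · exact absurd (if_neg hcr) hz2
    refine Prod.ext hcq.1.symm (funext fun s => ?_)
    show ε' s = ν s
    by_cases hs0 : s = j0
    · subst hs0; rw [hνj0]; exact hcr _ (Ne.symm h0)
    by_cases hs1 : s = j1
    · subst hs1; rw [hνj1]; exact hcr _ (Ne.symm h1)
    rw [hνo s hs0 hs1]; exact (hcq.2 s hs0 hs1).symm
  rw [Fintype.sum_eq_single ((c, ρ) : Fin 2 × (S → Fin 2)) ?hR]
  case hR =>
    rintro ⟨b, ε'⟩ hne
    by_cases hz : Rsite R2 j (a, ε) (b, ε') = 0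
    · rw [hz, zero_mul]
    by_cases hz2 : Qop R1 j0 j1 (b, ε') (c, ε'') = 0
    · rw [hz2, mul_zero]
    exfalso; apply hne
    rw [rsite_apply] at hz
    rw [qop_apply] at hz2
    by_cases hcr : ∀ k, k ≠ j → ε k = ε' k
    swap; · exact absurd (if_neg hcr) hz
    by_cases hcq : b = c ∧ ∀ s, s ≠ j0 → s ≠ j1 → ε' s = ε'' s
    swap; · exact absurd (if_neg hcq) hz2
    refine Prod.ext hcq.1 (funext fun s => ?_)
    show ε' s = ρ s
    by_cases hs : s = j
    · subst hs; rw [hρj]; exact hcq.2 s h0 h1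
    · rw [hρo s hs]; exact (hcr s hs).symm
  -- main computation
  rw [qop_apply, rsite_apply, rsite_apply, qop_apply]
  rw [if_pos ⟨rfl, fun s hs0 hs1 => (hνo s hs0 hs1).symm⟩]
  rw [if_pos (fun k hk => (hρo k hk).symm)]
  rw [hνj0, hνj1, hνj, hρj, hρo j0 (Ne.symm h0), hρo j1 (Ne.symm h1)]
  by_cases hD : ∀ k, k ≠ j → k ≠ j0 → k ≠ j1 → ε k = ε'' k
  · rw [if_pos ?d1, if_pos ?d2]
    · ring
    case d1 =>
      intro kk hk
      by_cases hk0 : kk = j0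
      · subst hk0; exact hνj0
      by_cases hk1 : kk = j1
      · subst hk1; exact hνj1
      rw [hνo kk hk0 hk1]; exact hD kk hk hk0 hk1
    case d2 =>
      refine ⟨rfl, fun s hs0 hs1 => ?_⟩
      by_cases hs : s = j
      · subst hs; exact hρj
      · rw [hρo s hs]; exact hD s hs hs0 hs1
  · rw [if_neg ?e1, if_neg ?e2]
    · ring
    case e1 =>
      intro hcond
      apply hD
      intro kk hk hk0 hk1
      have := hcond kk hk
      rwa [hνo kk hk0 hk1] at this
    case e2 =>
      rintro ⟨-, h2⟩
      apply hD
      intro kk hk hk0 hk1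
      have := h2 kk hk0 hk1
      rwa [hρo kk hk] at this

end StringAux


namespace StringAux

lemma rplus_ker (η : ℂ) (q : Fin 2 × Fin 2) :
    Rplus η η q (0, 1) + Rplus η η q (1, 0) * (-Complex.exp η) = 0 := by
  have key : Complex.exp (-η) * Complex.exp η = 1 := by
    rw [← Complex.exp_add, neg_add_cancel, Complex.exp_zero]
  fin_cases q <;>
    simp only [Rplus, Matrix.of_apply, Prod.ext_iff] <;> norm_num [bC, cM, cP]
  · linear_combination (-(Complex.sinh η / Complex.sinh (η + η))) * key
  · ring

/-- Splitting of the site list at the first two sites of block `k`. -/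
lemma sites_split (m Ns : ℕ) (k : Fin Ns) :
    ∃ L₁ L₂ : List (Fin Ns × Fin (m + 2)),
      sitesList (m + 2) Ns = L₁ ++ (k, 0) :: (k, 1) :: L₂ ∧ ∀ s ∈ L₁, s.1 ≠ k := by
  classical
  set g : Fin Ns → List (Fin Ns × Fin (m + 2)) :=
    fun b => (List.finRange (m + 2)).map fun β => (b, β) with hg
  have hk : (k : ℕ) < (List.finRange Ns).length := by simp [k.isLt]
  have hsplit : List.finRange Ns =
      (List.finRange Ns).take k ++ k :: (List.finRange Ns).drop (k + 1) := by
    conv_lhs => rw [← List.take_append_drop (k : ℕ) (List.finRange Ns)]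
    congr 1
    rw [List.drop_eq_getElem_cons hk]
    congr 1
    rw [List.getElem_finRange]
    ext; simp
  obtain ⟨rest, hfin2⟩ : ∃ rest, List.finRange (m + 2) = 0 :: 1 :: rest :=
    ⟨(List.finRange m).map (Fin.succ ∘ Fin.succ),
      by rw [List.finRange_succ, List.finRange_succ]; simp⟩
  refine ⟨((List.finRange Ns).take k).flatMap g,
    (rest.map fun β => (k, β)) ++ ((List.finRange Ns).drop (k + 1)).flatMap g, ?_, ?_⟩
  · rw [sitesList, ← hg]
    conv_lhs => rw [hsplit]
    rw [List.flatMap_append, List.flatMap_cons]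
    congr 1
    rw [hg]
    simp only [hfin2, List.map_cons, List.cons_append]
  · intro s hs
    rw [List.mem_flatMap] at hs
    obtain ⟨b, hb, hsb⟩ := hs
    rw [hg, List.mem_map] at hsb
    obtain ⟨β, -, rfl⟩ := hsb
    obtain ⟨i, hi, hEq⟩ := List.mem_iff_getElem.mp hb
    rw [List.getElem_take, List.getElem_finRange] at hEq
    have hikl : i < (k : ℕ) := by
      have := hi
      simpa [List.length_take] using this
    have hbval : (b : ℕ) = i := by rw [← hEq]; simp
    show b ≠ k
    intro hcon
    rw [hcon] at hbval
    omega

end StringAux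

/-- With complete `ℓ`-string inhomogeneities `w_j = w^{(ℓ)}_j`, for any
`1 ≤ M ≤ L−1` the transfer matrix `A(ξ_k)+D(ξ_k)` preserves the sector of exactly `M`
down spins and its restriction there has nontrivial kernel: the spin-1/2 transfer matrix
is non-regular at `λ = ξ_k`. -/
theorem transfer_nonregular_strings (ℓ Ns : ℕ) (hl : 2 ≤ ℓ) (hNs : 1 ≤ Ns)
    (η : ℂ) (ξ : Fin Ns → ℂ) (k : Fin Ns)
    (hden : ∀ s : FSite ℓ Ns, Complex.sinh (ξ k - wstring ℓ Ns η ξ s + η) ≠ 0)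
    (M : ℕ) (hM1 : 1 ≤ M) (hM2 : M < ℓ * Ns) :
    (∀ v : FIdx2 ℓ Ns → ℂ, (∀ ε, dcount ε ≠ M → v ε = 0) →
        ∀ ε, dcount ε ≠ M →
          (entryT (monodromy (Rplus η) (sitesList ℓ Ns) (wstring ℓ Ns η ξ) (ξ k)) 0 0
            + entryT (monodromy (Rplus η) (sitesList ℓ Ns) (wstring ℓ Ns η ξ) (ξ k)) 1 1).mulVec
              v ε = 0)
    ∧ ∃ v : FIdx2 ℓ Ns → ℂ, v ≠ 0 ∧ (∀ ε, dcount ε ≠ M → v ε = 0) ∧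
        (entryT (monodromy (Rplus η) (sitesList ℓ Ns) (wstring ℓ Ns η ξ) (ξ k)) 0 0
          + entryT (monodromy (Rplus η) (sitesList ℓ Ns) (wstring ℓ Ns η ξ) (ξ k)) 1 1).mulVec
            v = 0  := by
  obtain ⟨m, rfl⟩ : ∃ m, ℓ = m + 2 := ⟨ℓ - 2, by omega⟩
  classical
  set w : FSite (m + 2) Ns → ℂ := wstring (m + 2) Ns η ξ with hw
  set f : FSite (m + 2) Ns →
      Matrix (Fin 2 × FIdx2 (m + 2) Ns) (Fin 2 × FIdx2 (m + 2) Ns) ℂ :=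
    fun j => Rsite (Rplus η (ξ k - w j)) j with hf
  set T := monodromy (Rplus η) (sitesList (m + 2) Ns) w (ξ k) with hT
  have hTprod : T = ((sitesList (m + 2) Ns).map f).reverse.prod := rfl
  have hconsv : StringAux.consv T := by
    rw [hTprod]
    apply StringAux.consv_prod
    intro Mx hMx
    rw [List.mem_reverse, List.mem_map] at hMx
    obtain ⟨j, -, rfl⟩ := hMx
    exact StringAux.consv_rsite _ (StringAux.rplus_spin η _) j
  have hcons' : ∀ (a : Fin 2) (ε ε' : FIdx2 (m + 2) Ns),
      dcount ε ≠ dcount ε' → T (a, ε) (a, ε') = 0 := by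
    intro a ε ε' hne
    by_contra hz
    have h2 := hconsv (a, ε) (a, ε') hz
    simp only at h2
    omega
  constructor
  · -- sector preservation
    intro v hv ε hε
    simp only [Matrix.mulVec, dotProduct, Matrix.add_apply, entryT, Matrix.of_apply]
    apply Finset.sum_eq_zero
    intro ε' _
    by_cases hvz : v ε' = 0
    · rw [hvz, mul_zero]
    · have hd : dcount ε' = M := by
        by_contra h'
        exact hvz (hv ε' h')
      have h0 : T (0, ε) (0, ε') = 0 := hcons' 0 ε ε' (by omega)
      have h1 : T (1, ε) (1, ε') = 0 := hcons' 1 ε ε' (by omega)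
      rw [h0, h1, add_zero, zero_mul]
  · -- nontrivial kernel
    set j0 : FSite (m + 2) Ns := (k, 0) with hj0
    set j1 : FSite (m + 2) Ns := (k, 1) with hj1
    have hfin01 : (0 : Fin (m + 2)) ≠ 1 := Fin.ne_of_val_ne (by simp)
    have hj01 : j0 ≠ j1 := by
      intro h
      exact hfin01 (congrArg Prod.snd h)
    have harg0 : ξ k - w j0 = 0 := by
      rw [hw, hj0]
      show ξ k - (ξ k - (((0 : Fin (m + 2)) : ℕ) : ℂ) * η) = 0
      rw [Fin.val_zero]
      push_cast
      ring
    have harg1 : ξ k - w j1 = η := by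
      rw [hw, hj1]
      show ξ k - (ξ k - (((1 : Fin (m + 2)) : ℕ) : ℂ) * η) = η
      rw [Fin.val_one]
      push_cast
      ring
    have hη : Complex.sinh η ≠ 0 := by
      have h := hden j0
      rw [harg0, zero_add] at h
      exact h
    have hf0 : f j0 = Rsite StringAux.swapM j0 := by
      rw [hf]
      simp only
      rw [harg0, StringAux.rplus_zero η hη]
    have hf1 : f j1 = Rsite (Rplus η η) j1 := by
      rw [hf]
      simp only
      rw [harg1]
    obtain ⟨L₁, L₂, hsp, hL₁⟩ := StringAux.sites_split m Ns k
    set Q := StringAux.Qop (Rplus η η) j0 j1 with hQ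
    set P₁ := ((L₁.map f).reverse).prod with hP₁
    set P₂ := ((L₂.map f).reverse).prod with hP₂
    have hfact : T = P₂ * (f j1 * (f j0 * P₁)) := by
      rw [hTprod, hsp, hP₁, hP₂]
      simp only [List.map_append, List.map_cons, List.reverse_append, List.reverse_cons,
        List.prod_append, List.prod_cons, List.prod_nil, List.append_assoc,
        List.nil_append, List.cons_append, one_mul, mul_one, mul_assoc]
      rfl
    have hswap : f j1 * f j0 = f j0 * Q := by
      rw [hf0, hf1, hQ]
      exact StringAux.swap_conj (Rplus η η) j0 j1 hj01
    have hcommQ : Q * P₁ = P₁ * Q := by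
      refine Commute.list_prod_right _ _ ?_
      intro x hx
      rw [List.mem_reverse, List.mem_map] at hx
      obtain ⟨j, hjL, rfl⟩ := hx
      have hjk : j.1 ≠ k := hL₁ j hjL
      have hjj0 : j ≠ j0 := by intro h; rw [h, hj0] at hjk; exact hjk rfl
      have hjj1 : j ≠ j1 := by intro h; rw [h, hj1] at hjk; exact hjk rfl
      show Q * f j = f j * Q
      rw [hQ, hf]
      exact StringAux.qop_comm (Rplus η η) _ j0 j1 j hjj0 hjj1
    set W := P₂ * (f j0 * P₁) with hW
    have hfact2 : T = W * Q := by
      rw [hfact, hW, ← mul_assoc (f j1) (f j0) P₁, hswap,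
        mul_assoc (f j0) Q P₁, hcommQ, ← mul_assoc (f j0) P₁ Q, ← mul_assoc]
    have hcard2 : ({j0, j1} : Finset (FSite (m + 2) Ns)).card = 2 := by
      rw [Finset.card_insert_of_notMem (by simpa using hj01), Finset.card_singleton]
    have hcardU : Fintype.card (FSite (m + 2) Ns) = Ns * (m + 2) := by
      simp [Fintype.card_prod]
    have hcard : M - 1 ≤ ((Finset.univ : Finset (FSite (m + 2) Ns)) \ {j0, j1}).card := by
      rw [Finset.card_sdiff_of_subset (Finset.subset_univ _), hcard2, Finset.card_univ, hcardU,
        Nat.mul_comm Ns (m + 2)]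
      generalize hX : (m + 2) * Ns = X at hM2 ⊢
      omega
    obtain ⟨A, hA, hAcard⟩ := Finset.exists_subset_card_eq hcard
    have hj0A : j0 ∉ A := by
      intro h
      have h2 := hA h
      simp at h2
    have hj1A : j1 ∉ A := by
      intro h
      have h2 := hA h
      simp at h2
    set ε1 : FIdx2 (m + 2) Ns := fun s => if s ∈ insert j1 A then 1 else 0 with hε1
    set ε2 : FIdx2 (m + 2) Ns := fun s => if s ∈ insert j0 A then 1 else 0 with hε2
    have he1j0 : ε1 j0 = 0 := by
      rw [hε1]; simp [Finset.mem_insert, hj01, hj0A]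
    have he1j1 : ε1 j1 = 1 := by
      rw [hε1]; simp [Finset.mem_insert]
    have he2j0 : ε2 j0 = 1 := by
      rw [hε2]; simp [Finset.mem_insert]
    have he2j1 : ε2 j1 = 0 := by
      rw [hε2]; simp [Finset.mem_insert, Ne.symm hj01, hj1A]
    have heoff : ∀ s, s ≠ j0 → s ≠ j1 → ε1 s = ε2 s := by
      intro s h0 h1
      rw [hε1, hε2]
      simp [Finset.mem_insert, h0, h1]
    have hne12 : ε1 ≠ ε2 := by
      intro h
      have h2 := congrFun h j1
      rw [he1j1, he2j1] at h2
      exact absurd h2 (by decide)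
    set v0 : FIdx2 (m + 2) Ns → ℂ :=
      fun ε => if ε = ε1 then 1 else if ε = ε2 then -Complex.exp η else 0 with hv0
    have hv0e1 : v0 ε1 = 1 := by rw [hv0]; simp
    have hv0e2 : v0 ε2 = -Complex.exp η := by
      rw [hv0]
      simp [Ne.symm hne12]
    have hdcount : ∀ B : Finset (FSite (m + 2) Ns),
        dcount (fun s => if s ∈ B then (1 : Fin 2) else 0) = B.card := by
      intro B
      rw [dcount]
      congr 1
      ext s
      by_cases h : s ∈ B <;> simp [h]
    have hd1 : dcount ε1 = M := by
      rw [hε1, hdcount, Finset.card_insert_of_notMem hj1A, hAcard]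
      omega
    have hd2 : dcount ε2 = M := by
      rw [hε2, hdcount, Finset.card_insert_of_notMem hj0A, hAcard]
      omega
    have hkerQ : ∀ (p : Fin 2 × FIdx2 (m + 2) Ns) (a : Fin 2),
        ∑ ε', Q p (a, ε') * v0 ε' = 0 := by
      rintro ⟨pb, pε⟩ a
      have hzero : ∀ x ∈ (Finset.univ : Finset (FIdx2 (m + 2) Ns)),
          x ∉ ({ε1, ε2} : Finset (FIdx2 (m + 2) Ns)) → Q (pb, pε) (a, x) * v0 x = 0 := by
        intro x _ hx
        simp only [Finset.mem_insert, Finset.mem_singleton, not_or] at hx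
        rw [hv0]
        simp only [if_neg hx.1, if_neg hx.2, mul_zero]
      rw [← Finset.sum_subset (Finset.subset_univ _) hzero]
      rw [Finset.sum_pair hne12, hv0e1, hv0e2, hQ]
      rw [StringAux.qop_apply, StringAux.qop_apply]
      by_cases hc : pb = a ∧ ∀ s, s ≠ j0 → s ≠ j1 → pε s = ε1 s
      · have hc2 : pb = a ∧ ∀ s, s ≠ j0 → s ≠ j1 → pε s = ε2 s :=
          ⟨hc.1, fun s h0 h1 => by rw [hc.2 s h0 h1]; exact heoff s h0 h1⟩
        rw [if_pos hc, if_pos hc2, he1j0, he1j1, he2j0, he2j1, mul_one]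
        exact StringAux.rplus_ker η (pε j0, pε j1)
      · have hc2 : ¬(pb = a ∧ ∀ s, s ≠ j0 → s ≠ j1 → pε s = ε2 s) := by
          intro h
          exact hc ⟨h.1, fun s h0 h1 => by rw [h.2 s h0 h1, heoff s h0 h1]⟩
        rw [if_neg hc, if_neg hc2]
        ring
    have hTv : ∀ (a : Fin 2) (ε : FIdx2 (m + 2) Ns),
        ∑ ε', T (a, ε) (a, ε') * v0 ε' = 0 := by
      intro a ε
      rw [hfact2]
      simp only [Matrix.mul_apply, Finset.sum_mul, mul_assoc]
      rw [Finset.sum_comm]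
      refine Finset.sum_eq_zero fun y _ => ?_
      rw [← Finset.mul_sum, hkerQ y a, mul_zero]
    refine ⟨v0, ?_, ?_, ?_⟩
    · intro h
      have h2 := congrFun h ε1
      rw [hv0e1] at h2
      simp at h2
    · intro ε hdm
      rw [hv0]
      simp only
      have hn1 : ε ≠ ε1 := fun h => hdm (by rw [h]; exact hd1)
      have hn2 : ε ≠ ε2 := fun h => hdm (by rw [h]; exact hd2)
      rw [if_neg hn1, if_neg hn2]
    · funext ε
      simp only [Matrix.mulVec, dotProduct, Matrix.add_apply, entryT,
        Matrix.of_apply, add_mul, Pi.zero_apply]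
      rw [Finset.sum_add_distrib, hTv 0 ε, hTv 1 ε, add_zero]
end
end
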